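/- Let M, ε ∈ M_{d,T}(ℝ), set X = M + ε, and define r(A) = ‖A − X‖_F² and R(A) = ‖A − M‖_F². Then for every λ ∈ (0,1) and every A ∈ M_{d,T}(ℝ) with A ≠ M: R(A) ≤ (r(A) − ‖ε‖_F²)/(1−λ) + (1/(λ(1−λ)))·⟨ε, (A − M)/‖A − M‖_F⟩_F². -/

import Mathlib

open MeasureTheory ProbabilityTheory Matrix

noncomputable section

/-- Euclidean norm of a vector in `ℝ^n`. -/
def euclNorm {n : ℕ} (v : Fin n → ℝ) : ℝ := Real.sqrt (∑ i, v i ^ 2)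

/-- Frobenius inner product `⟨A,B⟩_F = trace (A Bᵀ)`. -/
def frobInner {d T : ℕ} (A B : Matrix (Fin d) (Fin T) ℝ) : ℝ := Matrix.trace (A * Bᵀ)

/-- Frobenius norm. -/
def frobNorm {d T : ℕ} (A : Matrix (Fin d) (Fin T) ℝ) : ℝ := Real.sqrt (frobInner A A)

/-- Operator norm (largest singular value) of a real matrix. -/
def opNorm {m n : ℕ} (A : Matrix (Fin m) (Fin n) ℝ) : ℝ :=
  sSup {c | ∃ x : Fin n → ℝ, euclNorm x = 1 ∧ c = euclNorm (A.mulVec x)}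

/-- The set of values whose supremum defines the sub-Gaussian norm of a random
vector `w` : `p^{-1/2} E(|⟨w, x⟩|^p)^{1/p}` for `‖x‖ = 1` and `p ∈ [1,∞)`. -/
def subgSet {Ω : Type} [MeasurableSpace Ω] (μ : Measure Ω) {n : ℕ} (w : Ω → Fin n → ℝ) :
    Set ℝ :=
  {y | ∃ x : Fin n → ℝ, euclNorm x = 1 ∧ ∃ p : ℝ, 1 ≤ p ∧
    y = p ^ (-(1 : ℝ) / 2) * (∫ ω, |∑ t, w ω t * x t| ^ p ∂μ) ^ (1 / p)}

/-- Sub-Gaussian norm of a random vector. -/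
def subgNorm {Ω : Type} [MeasurableSpace Ω] (μ : Measure Ω) {n : ℕ} (w : Ω → Fin n → ℝ) : ℝ :=
  sSup (subgSet μ w)

/-- `K̃ = max (K², K⁴)`. -/
def Ktilde (K : ℝ) : ℝ := max (K ^ 2) (K ^ 4)

/-- Assumption 1: the rows of `ε` are i.i.d. with invertible second-moment matrix `SigE`
(whose positive definite square root is `SigSqrt`), the whitened row is isotropic and has
finite sub-Gaussian norm `Ke`. -/
structure Assumption1 {Ω : Type} [MeasurableSpace Ω] (μ : Measure Ω)
    {d T : ℕ} (ε : Ω → Matrix (Fin d) (Fin T) ℝ)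
    (SigE SigSqrt : Matrix (Fin T) (Fin T) ℝ) (Ke : ℝ) : Prop where
  meas : ∀ i, Measurable fun ω => ε ω i
  indep : iIndepFun (fun i ω => ε ω i) μ
  ident : ∀ i j, IdentDistrib (fun ω => ε ω i) (fun ω => ε ω j) μ μ
  sqrt_posDef : SigSqrt.PosDef
  sqrt_mul_sqrt : SigSqrt * SigSqrt = SigE
  secondMoment : ∀ i t t', SigE t t' = ∫ ω, ε ω i t * ε ω i t' ∂μ
  isotropic : ∀ (i : Fin d) (t t' : Fin T),
    (∫ ω, Matrix.vecMul (ε ω i) SigSqrt⁻¹ t * Matrix.vecMul (ε ω i) SigSqrt⁻¹ t' ∂μ) =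
      if t = t' then 1 else 0
  bddSubg : ∀ i, BddAbove (subgSet μ fun ω => Matrix.vecMul (ε ω i) SigSqrt⁻¹)
  Ke_def : ∀ i, Ke = subgNorm μ fun ω => Matrix.vecMul (ε ω i) SigSqrt⁻¹

/-- The pseudo-inverse `Λ⁺ = Λᵀ (Λ Λᵀ)⁻¹` of a full-row-rank matrix. -/
def pinv {τ T : ℕ} (Λ : Matrix (Fin τ) (Fin T) ℝ) : Matrix (Fin T) (Fin τ) ℝ :=
  Λᵀ * (Λ * Λᵀ)⁻¹

/-- Assumption 2 (for `Λ`): the sub-Gaussian norm of the whitened first row of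
`ε̃ = ε Λ⁺` is finite and at most `Ke`. -/
def Assumption2 {Ω : Type} [MeasurableSpace Ω] (μ : Measure Ω)
    {d T τ : ℕ} (ε : Ω → Matrix (Fin d) (Fin T) ℝ)
    (SigE : Matrix (Fin T) (Fin T) ℝ) (Λ : Matrix (Fin τ) (Fin T) ℝ) (Ke : ℝ) : Prop :=
  ∃ SigTsqrt : Matrix (Fin τ) (Fin τ) ℝ, SigTsqrt.PosDef ∧
    SigTsqrt * SigTsqrt = (pinv Λ)ᵀ * SigE * pinv Λ ∧
    ∀ i, BddAbove (subgSet μ fun ω => Matrix.vecMul ((ε ω * pinv Λ) i) SigTsqrt⁻¹) ∧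
      subgNorm μ (fun ω => Matrix.vecMul ((ε ω * pinv Λ) i) SigTsqrt⁻¹) ≤ Ke

end

lemma frobInner_eq_sum {d T : ℕ} (A B : Matrix (Fin d) (Fin T) ℝ) :
    frobInner A B = ∑ i, ∑ j, A i j * B i j := by
  simp [frobInner, Matrix.trace, Matrix.mul_apply, Matrix.diag]

lemma frobInner_self_nonneg {d T : ℕ} (A : Matrix (Fin d) (Fin T) ℝ) :
    0 ≤ frobInner A A := by
  rw [frobInner_eq_sum]
  exact Finset.sum_nonneg fun i _ => Finset.sum_nonneg fun j _ => mul_self_nonneg _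

lemma frobNorm_sq {d T : ℕ} (A : Matrix (Fin d) (Fin T) ℝ) :
    frobNorm A ^ 2 = frobInner A A :=
  Real.sq_sqrt (frobInner_self_nonneg A)

lemma frobNorm_pos {d T : ℕ} (A : Matrix (Fin d) (Fin T) ℝ) (hA : A ≠ 0) :
    0 < frobNorm A := by
  have h0 : frobInner A A ≠ 0 := by
    intro h
    apply hA
    rw [frobInner_eq_sum] at h
    have := (Finset.sum_eq_zero_iff_of_nonneg
      (fun i _ => Finset.sum_nonneg fun j _ => mul_self_nonneg _)).1 h
    ext i j
    have h2 := (Finset.sum_eq_zero_iff_of_nonneg (fun j _ => mul_self_nonneg _)).1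
      (this i (Finset.mem_univ i)) j (Finset.mem_univ j)
    have := mul_self_eq_zero.1 h2
    simpa using this
  have := frobInner_self_nonneg A
  exact Real.sqrt_pos.2 (lt_of_le_of_ne this (Ne.symm h0))

/-- Lemma 5.1, inequality (5.1). -/
theorem statement11 {d T : ℕ} (M ε : Matrix (Fin d) (Fin T) ℝ)
    (X : Matrix (Fin d) (Fin T) ℝ) (hX : X = M + ε)
    (r R : Matrix (Fin d) (Fin T) ℝ → ℝ)
    (hr : ∀ A, r A = frobNorm (A - X) ^ 2) (hR : ∀ A, R A = frobNorm (A - M) ^ 2) :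
    ∀ lam : ℝ, lam ∈ Set.Ioo (0 : ℝ) 1 →
      ∀ A : Matrix (Fin d) (Fin T) ℝ, A ≠ M →
        R A ≤ (r A - frobNorm ε ^ 2) / (1 - lam) +
          (1 / (lam * (1 - lam))) * frobInner ε ((frobNorm (A - M))⁻¹ • (A - M)) ^ 2 := by
  rintro lam ⟨hl0, hl1⟩ A hA
  set n := frobNorm (A - M) with hn
  have hne : A - M ≠ 0 := sub_ne_zero.2 hA
  have hnpos : 0 < n := frobNorm_pos _ hne
  set s : ℝ := frobInner ε ((n)⁻¹ • (A - M)) with hs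
  have hsval : s = n⁻¹ * frobInner ε (A - M) := by
    simp only [hs, frobInner_eq_sum, Matrix.smul_apply, smul_eq_mul, Finset.mul_sum]
    exact Finset.sum_congr rfl fun i _ => Finset.sum_congr rfl fun j _ => by ring
  have hRA : R A = n ^ 2 := by rw [hR, hn]
  have hn2 : n ^ 2 = frobInner (A - M) (A - M) := frobNorm_sq _
  have hrA : r A = frobInner (A - M) (A - M) - 2 * frobInner ε (A - M) + frobInner ε ε := by
    rw [hr, hX, frobNorm_sq]
    have : A - (M + ε) = (A - M) - ε := by abel
    rw [this]
    simp only [frobInner_eq_sum, Matrix.sub_apply, Finset.mul_sum,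
      ← Finset.sum_sub_distrib, ← Finset.sum_add_distrib]
    exact Finset.sum_congr rfl fun i _ => Finset.sum_congr rfl fun j _ => by ring
  have hepsn : frobNorm ε ^ 2 = frobInner ε ε := frobNorm_sq _
  have hip : frobInner ε (A - M) = n * s := by
    rw [hsval]; field_simp
  have hl1' : 0 < 1 - lam := by linarith
  rw [hRA, hrA, hepsn, hip]
  rw [← hn2, ← sub_nonneg]
  have heq : (n ^ 2 - 2 * (n * s) + frobInner ε ε - frobInner ε ε) / (1 - lam) +
      1 / (lam * (1 - lam)) * s ^ 2 - n ^ 2 = (lam * n - s) ^ 2 / (lam * (1 - lam)) := by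
    field_simp
    ring
  rw [heq]
  positivity
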